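/- Let A_S be the Artin-Tits group of type H_4 with generators σ_1, σ_2, σ_3, σ_4, and let X = {s_1, s_2, s_3} (a standard parabolic subset of type H_3). Then the elements g = σ_1σ_3σ_3 and h = σ_3σ_1σ_1 are conjugate in A_S but are not conjugate in the standard parabolic subgroup A_X generated by {σ_1, σ_2, σ_3}. In particular, A_X is not conjugacy stable in A_S. -/

import Mathlib

namespace ArtinTits

variable {B : Type*}

/-- The alternating product `a b a b ⋯` with `m` factors, starting with `a`. -/
def altProd {G : Type*} [Monoid G] (a b : G) : ℕ → G
  | 0 => 1
  | n + 1 => a * altProd b a n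

/-- The braid relations defining the Artin–Tits group of a Coxeter matrix:
`Π(σ_s, σ_t; m_{s,t}) = Π(σ_t, σ_s; m_{s,t})` whenever `m_{s,t} ≠ ∞` (here `∞` is coded by `0`). -/
def artinRelationsSet (M : CoxeterMatrix B) : Set (FreeGroup B) :=
  {r | ∃ s t : B, M s t ≠ 0 ∧
    r = altProd (FreeGroup.of s) (FreeGroup.of t) (M s t) *
        (altProd (FreeGroup.of t) (FreeGroup.of s) (M s t))⁻¹}

/-- The Artin–Tits group of a Coxeter matrix. -/
abbrev ArtinGroup (M : CoxeterMatrix B) : Type _ := PresentedGroup (artinRelationsSet M)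

/-- The standard generator `σ_s` of the Artin–Tits group. -/
def σ (M : CoxeterMatrix B) (s : B) : ArtinGroup M := PresentedGroup.of s

/-- The standard parabolic subgroup `A_X` of the Artin–Tits group. -/
def AP (M : CoxeterMatrix B) (X : Set B) : Subgroup (ArtinGroup M) :=
  Subgroup.closure (σ M '' X)

/-- The standard parabolic subgroup `W_X` of the Coxeter group. -/
def WP (M : CoxeterMatrix B) (X : Set B) : Subgroup M.Group :=
  Subgroup.closure (M.simple '' X)

/-- A subgroup `H ≤ G` is conjugacy stable if any two elements of `H` which are conjugate
in `G` are already conjugate by an element of `H`. -/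
def IsConjugacyStable {G : Type*} [Group G] (H : Subgroup G) : Prop :=
  ∀ a b : G, a ∈ H → b ∈ H → (∃ g : G, g⁻¹ * a * g = b) → ∃ h ∈ H, h⁻¹ * a * h = b

/-- Property `⋆_W` for the pair `(W_X, W_S)`. -/
def StarW (M : CoxeterMatrix B) (X : Set B) : Prop :=
  ∀ Y₁ Y₂ : Set B, Y₁ ⊆ X → Y₂ ⊆ X → ∀ w : M.Group,
    (fun x => w⁻¹ * x * w) '' (M.simple '' Y₁) = M.simple '' Y₂ →
    ∃ v ∈ WP M X, ∀ y ∈ Y₁, v⁻¹ * M.simple y * v = w⁻¹ * M.simple y * w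

/-- Property `⋆_A` for the pair `(A_X, A_S)`. -/
def StarA (M : CoxeterMatrix B) (X : Set B) : Prop :=
  ∀ Y₁ Y₂ : Set B, Y₁ ⊆ X → Y₂ ⊆ X → ∀ g : ArtinGroup M,
    (fun x => g⁻¹ * x * g) '' (σ M '' Y₁) = σ M '' Y₂ →
    ∃ h ∈ AP M X, ∀ y ∈ Y₁, h⁻¹ * σ M y * h = g⁻¹ * σ M y * g

/-- Adjacency in the Coxeter graph: `s` and `t` are joined by an edge iff `m_{s,t} ≥ 3`
(where the value `0` codes `∞`, which also gives an edge). -/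
def Adj (M : CoxeterMatrix B) (s t : B) : Prop := s ≠ t ∧ M s t ≠ 2

/-- `s` and `t` are connected by a path of the Coxeter graph staying inside `X`. -/
def ReachIn (M : CoxeterMatrix B) (X : Set B) (s t : B) : Prop :=
  Relation.ReflTransGen (fun a b => a ∈ X ∧ b ∈ X ∧ Adj M a b) s t

/-- The Coxeter graph induced on `X` is connected. -/
def ConnectedIn (M : CoxeterMatrix B) (X : Set B) : Prop :=
  ∀ s ∈ X, ∀ t ∈ X, ReachIn M X s t

/-- The Coxeter matrix `M` restricted to `X` is of the type of the Coxeter matrix `M'`,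
i.e. there is a bijection transporting one to the other. -/
def IsOfType {B' : Type*} (M : CoxeterMatrix B) (X : Set B) (M' : CoxeterMatrix B') : Prop :=
  ∃ e : X ≃ B', ∀ a b : X, M a.val b.val = M' (e a) (e b)

/-- The Coxeter matrix of type `Bₙ` with the paper's labelling: vertices `0, …, n-1`
(representing `s_1, …, s_n`), `m_{s_1, s_2} = 4` and `m_{s_i, s_{i+1}} = 3` for `i ≥ 2`. -/
def Bmat (n : ℕ) : CoxeterMatrix (Fin n) where
  M := Matrix.of fun i j : Fin n ↦
    if i = j then 1
      else (if (i.val = 0 ∧ j.val = 1) ∨ (j.val = 0 ∧ i.val = 1) then 4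
        else (if (j : ℕ) + 1 = i ∨ (i : ℕ) + 1 = j then 3 else 2))
  isSymm := by unfold Matrix.IsSymm; aesop
  diagonal := by simp
  off_diagonal := by aesop

/-- The Coxeter matrix of type `Dₙ` with the paper's labelling: vertices `0, …, n-1`
(representing `s_1, …, s_n`), with edges `{s_1, s_3}`, `{s_2, s_3}` and `{s_i, s_{i+1}}`
for `i ≥ 3`, all labelled `3`. -/
def Dmat (n : ℕ) : CoxeterMatrix (Fin n) where
  M := Matrix.of fun i j : Fin n ↦
    if i = j then 1
      else (if (i.val = 0 ∧ j.val = 2) ∨ (j.val = 0 ∧ i.val = 2) then 3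
        else (if i.val = 0 ∨ j.val = 0 then 2
          else (if (j : ℕ) + 1 = i ∨ (i : ℕ) + 1 = j then 3 else 2)))
  isSymm := by unfold Matrix.IsSymm; aesop
  diagonal := by simp
  off_diagonal := by aesop

end ArtinTits

namespace ArtinTits

/-- The Coxeter matrix of type `H₄` with the paper's labelling: `m_{s_1,s_2} = 5`,
`m_{s_2,s_3} = 3`, `m_{s_3,s_4} = 3` (vertices `0, 1, 2, 3` standing for `s_1, s_2, s_3, s_4`). -/
def H4p : CoxeterMatrix (Fin 4) where
  M := !![1, 5, 2, 2;
          5, 1, 3, 2;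
          2, 3, 1, 3;
          2, 2, 3, 1]
  off_diagonal := by
    intro i i' h
    fin_cases i <;> fin_cases i' <;> simp_all

section Part1

local notation "A" => ArtinGroup H4p
private abbrev s (i : Fin 4) : ArtinGroup H4p := σ H4p i

private lemma map_altProd {G H : Type*} [Monoid G] [Monoid H] (φ : G →* H) :
    ∀ (n : ℕ) (a b : G), φ (altProd a b n) = altProd (φ a) (φ b) n := by
  intro n
  induction n with
  | zero => intro a b; simp [altProd]
  | succ k ih => intro a b; simp [altProd, ih]

private lemma braidN (a b : Fin 4) (h : H4p a b ≠ 0) :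
    altProd (s a) (s b) (H4p a b) = altProd (s b) (s a) (H4p a b) := by
  have hrel : (altProd (FreeGroup.of a) (FreeGroup.of b) (H4p a b) *
      (altProd (FreeGroup.of b) (FreeGroup.of a) (H4p a b))⁻¹) ∈ artinRelationsSet H4p :=
    ⟨a, b, h, rfl⟩
  have h1 : (PresentedGroup.mk (artinRelationsSet H4p))
      (altProd (FreeGroup.of a) (FreeGroup.of b) (H4p a b) *
      (altProd (FreeGroup.of b) (FreeGroup.of a) (H4p a b))⁻¹) = 1 :=
    (QuotientGroup.eq_one_iff _).mpr (Subgroup.subset_normalClosure hrel)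
  rw [map_mul, map_inv, map_altProd, map_altProd, mul_inv_eq_one] at h1
  exact h1

private lemma r01 : s 0*(s 1*(s 0*(s 1*(s 0*(1:ArtinGroup H4p))))) = s 1*(s 0*(s 1*(s 0*(s 1*1)))) :=
  braidN 0 1 (by decide)
private lemma r12 : s 1*(s 2*(s 1*(1:ArtinGroup H4p))) = s 2*(s 1*(s 2*1)) := braidN 1 2 (by decide)
private lemma r23 : s 2*(s 3*(s 2*(1:ArtinGroup H4p))) = s 3*(s 2*(s 3*1)) := braidN 2 3 (by decide)
private lemma r02 : s 0*(s 2*(1:ArtinGroup H4p)) = s 2*(s 0*1) := braidN 0 2 (by decide)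
private lemma r03 : s 0*(s 3*(1:ArtinGroup H4p)) = s 3*(s 0*1) := braidN 0 3 (by decide)
private lemma r13 : s 1*(s 3*(1:ArtinGroup H4p)) = s 3*(s 1*1) := braidN 1 3 (by decide)

private lemma rr01 : s 0*(s 1*(s 0*(s 1*(s 0:ArtinGroup H4p)))) = s 1*(s 0*(s 1*(s 0*(s 1)))) := by
  simpa only [mul_one] using r01
private lemma rr12 : s 1*(s 2*(s 1:ArtinGroup H4p)) = s 2*(s 1*(s 2)) := by
  simpa only [mul_one] using r12
private lemma rr23 : s 2*(s 3*(s 2:ArtinGroup H4p)) = s 3*(s 2*(s 3)) := by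
  simpa only [mul_one] using r23
private lemma rr02 : s 0*(s 2:ArtinGroup H4p) = s 2*(s 0) := by simpa only [mul_one] using r02
private lemma rr03 : s 0*(s 3:ArtinGroup H4p) = s 3*(s 0) := by simpa only [mul_one] using r03
private lemma rr13 : s 1*(s 3:ArtinGroup H4p) = s 3*(s 1) := by simpa only [mul_one] using r13

private lemma rt01 (z : ArtinGroup H4p) :
    s 0*(s 1*(s 0*(s 1*(s 0*z)))) = s 1*(s 0*(s 1*(s 0*(s 1*z)))) := by
  simp only [← mul_assoc]
  exact congrArg (· * z) (by simpa only [← mul_assoc] using rr01)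
private lemma rt12 (z : ArtinGroup H4p) : s 1*(s 2*(s 1*z)) = s 2*(s 1*(s 2*z)) := by
  simp only [← mul_assoc]
  exact congrArg (· * z) (by simpa only [← mul_assoc] using rr12)
private lemma rt23 (z : ArtinGroup H4p) : s 2*(s 3*(s 2*z)) = s 3*(s 2*(s 3*z)) := by
  simp only [← mul_assoc]
  exact congrArg (· * z) (by simpa only [← mul_assoc] using rr23)
private lemma rt02 (z : ArtinGroup H4p) : s 0*(s 2*z) = s 2*(s 0*z) := by
  simp only [← mul_assoc]; exact congrArg (· * z) rr02
private lemma rt03 (z : ArtinGroup H4p) : s 0*(s 3*z) = s 3*(s 0*z) := by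
  simp only [← mul_assoc]; exact congrArg (· * z) rr03
private lemma rt13 (z : ArtinGroup H4p) : s 1*(s 3*z) = s 3*(s 1*z) := by
  simp only [← mul_assoc]; exact congrArg (· * z) rr13

private lemma L (a : ArtinGroup H4p) {x y : ArtinGroup H4p} (h : x = y) : a * x = a * y :=
  congrArg (a * ·) h

private lemma chain1 : s 3 * (s 2 * (s 1 * (s 0 * (s 1 * (s 0 * (s 2 * (s 1 * (s 0 * (s 3 * (s 2 * (s 1 * (s 0 * (s 1 * (s 2 * (s 3 * (s 0)))))))))))))))) = s 2 * (s 3 * (s 2 * (s 1 * (s 0 * (s 1 * (s 0 * (s 2 * (s 1 * (s 0 * (s 3 * (s 2 * (s 1 * (s 0 * (s 1 * (s 2 * (s 3)))))))))))))))) :=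
  calc s 3 * (s 2 * (s 1 * (s 0 * (s 1 * (s 0 * (s 2 * (s 1 * (s 0 * (s 3 * (s 2 * (s 1 * (s 0 * (s 1 * (s 2 * (s 3 * (s 0))))))))))))))))
    _ = s 3 * (s 2 * (s 1 * (s 0 * (s 1 * (s 0 * (s 2 * (s 1 * (s 3 * (s 0 * (s 2 * (s 1 * (s 0 * (s 1 * (s 2 * (s 3 * (s 0)))))))))))))))) := L (s 3) (L (s 2) (L (s 1) (L (s 0) (L (s 1) (L (s 0) (L (s 2) (L (s 1) (rt03 _))))))))
    _ = s 3 * (s 2 * (s 1 * (s 0 * (s 1 * (s 0 * (s 2 * (s 1 * (s 3 * (s 2 * (s 0 * (s 1 * (s 0 * (s 1 * (s 2 * (s 3 * (s 0)))))))))))))))) := L (s 3) (L (s 2) (L (s 1) (L (s 0) (L (s 1) (L (s 0) (L (s 2) (L (s 1) (L (s 3) (rt02 _)))))))))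
    _ = s 3 * (s 2 * (s 1 * (s 0 * (s 1 * (s 0 * (s 2 * (s 1 * (s 3 * (s 2 * (s 0 * (s 1 * (s 0 * (s 1 * (s 2 * (s 0 * (s 3)))))))))))))))) := L (s 3) (L (s 2) (L (s 1) (L (s 0) (L (s 1) (L (s 0) (L (s 2) (L (s 1) (L (s 3) (L (s 2) (L (s 0) (L (s 1) (L (s 0) (L (s 1) (L (s 2) ((rr03).symm)))))))))))))))
    _ = s 3 * (s 2 * (s 1 * (s 0 * (s 1 * (s 0 * (s 2 * (s 1 * (s 3 * (s 2 * (s 0 * (s 1 * (s 0 * (s 1 * (s 0 * (s 2 * (s 3)))))))))))))))) := L (s 3) (L (s 2) (L (s 1) (L (s 0) (L (s 1) (L (s 0) (L (s 2) (L (s 1) (L (s 3) (L (s 2) (L (s 0) (L (s 1) (L (s 0) (L (s 1) ((rt02 _).symm))))))))))))))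
    _ = s 3 * (s 2 * (s 1 * (s 0 * (s 1 * (s 0 * (s 2 * (s 1 * (s 3 * (s 2 * (s 1 * (s 0 * (s 1 * (s 0 * (s 1 * (s 2 * (s 3)))))))))))))))) := L (s 3) (L (s 2) (L (s 1) (L (s 0) (L (s 1) (L (s 0) (L (s 2) (L (s 1) (L (s 3) (L (s 2) (rt01 _))))))))))
    _ = s 3 * (s 2 * (s 1 * (s 0 * (s 1 * (s 0 * (s 2 * (s 3 * (s 1 * (s 2 * (s 1 * (s 0 * (s 1 * (s 0 * (s 1 * (s 2 * (s 3)))))))))))))))) := L (s 3) (L (s 2) (L (s 1) (L (s 0) (L (s 1) (L (s 0) (L (s 2) (rt13 _)))))))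
    _ = s 3 * (s 2 * (s 1 * (s 0 * (s 1 * (s 0 * (s 2 * (s 3 * (s 2 * (s 1 * (s 2 * (s 0 * (s 1 * (s 0 * (s 1 * (s 2 * (s 3)))))))))))))))) := L (s 3) (L (s 2) (L (s 1) (L (s 0) (L (s 1) (L (s 0) (L (s 2) (L (s 3) (rt12 _))))))))
    _ = s 3 * (s 2 * (s 1 * (s 0 * (s 1 * (s 0 * (s 3 * (s 2 * (s 3 * (s 1 * (s 2 * (s 0 * (s 1 * (s 0 * (s 1 * (s 2 * (s 3)))))))))))))))) := L (s 3) (L (s 2) (L (s 1) (L (s 0) (L (s 1) (L (s 0) (rt23 _))))))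
    _ = s 3 * (s 2 * (s 1 * (s 0 * (s 1 * (s 0 * (s 3 * (s 2 * (s 3 * (s 1 * (s 0 * (s 2 * (s 1 * (s 0 * (s 1 * (s 2 * (s 3)))))))))))))))) := L (s 3) (L (s 2) (L (s 1) (L (s 0) (L (s 1) (L (s 0) (L (s 3) (L (s 2) (L (s 3) (L (s 1) ((rt02 _).symm))))))))))
    _ = s 3 * (s 2 * (s 1 * (s 0 * (s 1 * (s 3 * (s 0 * (s 2 * (s 3 * (s 1 * (s 0 * (s 2 * (s 1 * (s 0 * (s 1 * (s 2 * (s 3)))))))))))))))) := L (s 3) (L (s 2) (L (s 1) (L (s 0) (L (s 1) (rt03 _)))))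
    _ = s 3 * (s 2 * (s 1 * (s 0 * (s 3 * (s 1 * (s 0 * (s 2 * (s 3 * (s 1 * (s 0 * (s 2 * (s 1 * (s 0 * (s 1 * (s 2 * (s 3)))))))))))))))) := L (s 3) (L (s 2) (L (s 1) (L (s 0) (rt13 _))))
    _ = s 3 * (s 2 * (s 1 * (s 3 * (s 0 * (s 1 * (s 0 * (s 2 * (s 3 * (s 1 * (s 0 * (s 2 * (s 1 * (s 0 * (s 1 * (s 2 * (s 3)))))))))))))))) := L (s 3) (L (s 2) (L (s 1) (rt03 _)))
    _ = s 3 * (s 2 * (s 3 * (s 1 * (s 0 * (s 1 * (s 0 * (s 2 * (s 3 * (s 1 * (s 0 * (s 2 * (s 1 * (s 0 * (s 1 * (s 2 * (s 3)))))))))))))))) := L (s 3) (L (s 2) (rt13 _))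
    _ = s 2 * (s 3 * (s 2 * (s 1 * (s 0 * (s 1 * (s 0 * (s 2 * (s 3 * (s 1 * (s 0 * (s 2 * (s 1 * (s 0 * (s 1 * (s 2 * (s 3)))))))))))))))) := (rt23 _).symm
    _ = s 2 * (s 3 * (s 2 * (s 1 * (s 0 * (s 1 * (s 0 * (s 2 * (s 1 * (s 3 * (s 0 * (s 2 * (s 1 * (s 0 * (s 1 * (s 2 * (s 3)))))))))))))))) := L (s 2) (L (s 3) (L (s 2) (L (s 1) (L (s 0) (L (s 1) (L (s 0) (L (s 2) ((rt13 _).symm))))))))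
    _ = s 2 * (s 3 * (s 2 * (s 1 * (s 0 * (s 1 * (s 0 * (s 2 * (s 1 * (s 0 * (s 3 * (s 2 * (s 1 * (s 0 * (s 1 * (s 2 * (s 3)))))))))))))))) := L (s 2) (L (s 3) (L (s 2) (L (s 1) (L (s 0) (L (s 1) (L (s 0) (L (s 2) (L (s 1) ((rt03 _).symm)))))))))

private lemma chain2 : s 3 * (s 2 * (s 1 * (s 0 * (s 1 * (s 0 * (s 2 * (s 1 * (s 0 * (s 3 * (s 2 * (s 1 * (s 0 * (s 1 * (s 2 * (s 3 * (s 2)))))))))))))))) = s 0 * (s 3 * (s 2 * (s 1 * (s 0 * (s 1 * (s 0 * (s 2 * (s 1 * (s 0 * (s 3 * (s 2 * (s 1 * (s 0 * (s 1 * (s 2 * (s 3)))))))))))))))) :=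
  calc s 3 * (s 2 * (s 1 * (s 0 * (s 1 * (s 0 * (s 2 * (s 1 * (s 0 * (s 3 * (s 2 * (s 1 * (s 0 * (s 1 * (s 2 * (s 3 * (s 2))))))))))))))))
    _ = s 3 * (s 2 * (s 1 * (s 0 * (s 1 * (s 0 * (s 2 * (s 1 * (s 0 * (s 3 * (s 2 * (s 1 * (s 0 * (s 1 * (s 3 * (s 2 * (s 3)))))))))))))))) := L (s 3) (L (s 2) (L (s 1) (L (s 0) (L (s 1) (L (s 0) (L (s 2) (L (s 1) (L (s 0) (L (s 3) (L (s 2) (L (s 1) (L (s 0) (L (s 1) (rr23))))))))))))))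
    _ = s 3 * (s 2 * (s 1 * (s 0 * (s 1 * (s 0 * (s 2 * (s 1 * (s 0 * (s 3 * (s 2 * (s 1 * (s 0 * (s 3 * (s 1 * (s 2 * (s 3)))))))))))))))) := L (s 3) (L (s 2) (L (s 1) (L (s 0) (L (s 1) (L (s 0) (L (s 2) (L (s 1) (L (s 0) (L (s 3) (L (s 2) (L (s 1) (L (s 0) (rt13 _)))))))))))))
    _ = s 3 * (s 2 * (s 1 * (s 0 * (s 1 * (s 0 * (s 2 * (s 1 * (s 0 * (s 3 * (s 2 * (s 1 * (s 3 * (s 0 * (s 1 * (s 2 * (s 3)))))))))))))))) := L (s 3) (L (s 2) (L (s 1) (L (s 0) (L (s 1) (L (s 0) (L (s 2) (L (s 1) (L (s 0) (L (s 3) (L (s 2) (L (s 1) (rt03 _))))))))))))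
    _ = s 3 * (s 2 * (s 1 * (s 0 * (s 1 * (s 0 * (s 2 * (s 1 * (s 0 * (s 3 * (s 2 * (s 3 * (s 1 * (s 0 * (s 1 * (s 2 * (s 3)))))))))))))))) := L (s 3) (L (s 2) (L (s 1) (L (s 0) (L (s 1) (L (s 0) (L (s 2) (L (s 1) (L (s 0) (L (s 3) (L (s 2) (rt13 _)))))))))))
    _ = s 3 * (s 2 * (s 1 * (s 0 * (s 1 * (s 0 * (s 2 * (s 1 * (s 0 * (s 2 * (s 3 * (s 2 * (s 1 * (s 0 * (s 1 * (s 2 * (s 3)))))))))))))))) := L (s 3) (L (s 2) (L (s 1) (L (s 0) (L (s 1) (L (s 0) (L (s 2) (L (s 1) (L (s 0) ((rt23 _).symm)))))))))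
    _ = s 3 * (s 2 * (s 1 * (s 0 * (s 1 * (s 0 * (s 2 * (s 1 * (s 2 * (s 0 * (s 3 * (s 2 * (s 1 * (s 0 * (s 1 * (s 2 * (s 3)))))))))))))))) := L (s 3) (L (s 2) (L (s 1) (L (s 0) (L (s 1) (L (s 0) (L (s 2) (L (s 1) (rt02 _))))))))
    _ = s 3 * (s 2 * (s 1 * (s 0 * (s 1 * (s 0 * (s 1 * (s 2 * (s 1 * (s 0 * (s 3 * (s 2 * (s 1 * (s 0 * (s 1 * (s 2 * (s 3)))))))))))))))) := L (s 3) (L (s 2) (L (s 1) (L (s 0) (L (s 1) (L (s 0) ((rt12 _).symm))))))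
    _ = s 3 * (s 2 * (s 0 * (s 1 * (s 0 * (s 1 * (s 0 * (s 2 * (s 1 * (s 0 * (s 3 * (s 2 * (s 1 * (s 0 * (s 1 * (s 2 * (s 3)))))))))))))))) := L (s 3) (L (s 2) ((rt01 _).symm))
    _ = s 3 * (s 0 * (s 2 * (s 1 * (s 0 * (s 1 * (s 0 * (s 2 * (s 1 * (s 0 * (s 3 * (s 2 * (s 1 * (s 0 * (s 1 * (s 2 * (s 3)))))))))))))))) := L (s 3) ((rt02 _).symm)
    _ = s 0 * (s 3 * (s 2 * (s 1 * (s 0 * (s 1 * (s 0 * (s 2 * (s 1 * (s 0 * (s 3 * (s 2 * (s 1 * (s 0 * (s 1 * (s 2 * (s 3)))))))))))))))) := (rt03 _).symm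


private abbrev U : ArtinGroup H4p :=
  s 3 * (s 2 * (s 1 * (s 0 * (s 1 * (s 0 * (s 2 * (s 1 * (s 0 * (s 3 * (s 2 * (s 1 * (s 0 * (s 1 * (s 2 * (s 3)))))))))))))))

private lemma E1 : U * s 0 = s 2 * U := by
  have h := chain1
  simpa only [mul_assoc] using h

private lemma E2 : U * s 2 = s 0 * U := by
  have h := chain2
  simpa only [mul_assoc] using h

private lemma existence :
    ∃ c : ArtinGroup H4p,
      c⁻¹ * (σ H4p 0 * σ H4p 2 * σ H4p 2) * c = σ H4p 2 * σ H4p 0 * σ H4p 0 := by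
  refine ⟨U⁻¹, ?_⟩
  rw [inv_inv, mul_inv_eq_iff_eq_mul]
  show U * (s 0 * s 2 * s 2) = s 2 * s 0 * s 0 * U
  calc U * (s 0 * s 2 * s 2) = ((U * s 0) * s 2) * s 2 := by simp only [mul_assoc]
    _ = ((s 2 * U) * s 2) * s 2 := by rw [E1]
    _ = (s 2 * (U * s 2)) * s 2 := by simp only [mul_assoc]
    _ = (s 2 * (s 0 * U)) * s 2 := by rw [E2]
    _ = (s 2 * s 0) * (U * s 2) := by simp only [mul_assoc]
    _ = (s 2 * s 0) * (s 0 * U) := by rw [E2]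
    _ = s 2 * s 0 * s 0 * U := by simp only [mul_assoc]

end Part1

section Part2

private abbrev M4 := Matrix (Fin 4) (Fin 4) (ZMod 11)

private def dec (n : ℕ) : M4 := Matrix.of fun i j => ((n / 11 ^ (4 * i.val + j.val)) % 11 : ℕ)

private instance : DecidableEq M4ˣ := fun a b => decidable_of_iff (a.val = b.val) Units.ext_iff.symm

private def mku (n : ℕ) (h : dec n * dec n = 1) : M4ˣ := ⟨dec n, dec n, h, h⟩

private def T0 : M4ˣ := mku 4177274107001401 (by decide)
private def T1 : M4ˣ := mku 4177274110339452 (by decide)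
private def T2 : M4ˣ := mku 4177795213441015 (by decide)
private def T3 : M4ˣ := mku 42152257465325404 (by decide)
private def R1 : M4ˣ := mku 4177274109945126 (by decide)
private def R2 : M4ˣ := mku 4177274122931910 (by decide)
private def R3 : M4ˣ := mku 4177274123283104 (by decide)
private def R4 : M4ˣ := mku 4177558812754130 (by decide)
private def R5 : M4ˣ := mku 3834876522791194 (by decide)

private def T : Fin 4 → M4ˣ := ![T0, T1, T2, T3]

@[ext]
private structure GW where
  w : M4ˣ
  f : M4ˣ → ℤ

private instance : Mul GW := ⟨fun a b => ⟨a.w * b.w, fun x => a.f x + b.f (a.w⁻¹ * x * a.w)⟩⟩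
private instance : One GW := ⟨⟨1, fun _ => 0⟩⟩
private instance : Inv GW := ⟨fun a => ⟨a.w⁻¹, fun x => - a.f (a.w * x * a.w⁻¹)⟩⟩

private lemma mulw (a b : GW) : (a * b).w = a.w * b.w := rfl
private lemma mulf (a b : GW) (x : M4ˣ) : (a * b).f x = a.f x + b.f (a.w⁻¹ * x * a.w) := rfl
private lemma onew : (1 : GW).w = 1 := rfl
private lemma onef (x : M4ˣ) : (1 : GW).f x = 0 := rfl
private lemma invw (a : GW) : (a⁻¹).w = a.w⁻¹ := rfl
private lemma invf (a : GW) (x : M4ˣ) : (a⁻¹).f x = - a.f (a.w * x * a.w⁻¹) := rfl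

private instance : Group GW where
  mul_assoc a b c := by
    refine GW.ext (mul_assoc _ _ _) (funext fun x => ?_)
    simp only [mulf, mulw, mul_inv_rev, mul_assoc, add_assoc]
  one_mul a := by
    refine GW.ext (one_mul _) (funext fun x => ?_)
    simp only [mulf, onef, onew, inv_one, one_mul, mul_one, zero_add]
  mul_one a := by
    refine GW.ext (mul_one _) (funext fun x => ?_)
    simp only [mulf, onef, add_zero]
  inv_mul_cancel a := by
    refine GW.ext (inv_mul_cancel _) (funext fun x => ?_)
    simp only [mulf, invf, invw, onef, inv_inv, neg_add_cancel]

private def e (a : M4ˣ) : M4ˣ → ℤ := fun x => if x = a then 1 else 0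

private def F (i : Fin 4) : GW := ⟨T i, e (T i)⟩

private lemma Fw (i : Fin 4) : (F i).w = T i := rfl
private lemma Ff (i : Fin 4) (x : M4ˣ) : (F i).f x = e (T i) x := rfl

private lemma e_conj (a c x : M4ˣ) : e a (c⁻¹ * x * c) = e (c * a * c⁻¹) x := by
  simp only [e]
  refine if_congr ⟨fun h => by rw [← h]; group, fun h => by rw [h]; group⟩ rfl rfl


private lemma Tv0 : T 0 = T0 := rfl
private lemma Tv1 : T 1 = T1 := rfl
private lemma Tv2 : T 2 = T2 := rfl
private lemma Tv3 : T 3 = T3 := rfl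

private lemma c01 : altProd (F 0) (F 1) 5 = altProd (F 1) (F 0) 5 := by
  show F 0 * (F 1 * (F 0 * (F 1 * (F 0 * (1))))) = F 1 * (F 0 * (F 1 * (F 0 * (F 1 * (1)))))
  have q1 : T0 * R3 * T0⁻¹ = R2 := Units.ext (by decide)
  have q2 : T0 * R2 * T0⁻¹ = R3 := Units.ext (by decide)
  have q3 : T0 * R1 * T0⁻¹ = T1 := Units.ext (by decide)
  have q4 : T0 * T0 * T0⁻¹ = T0 := Units.ext (by decide)
  have q5 : T0 * T1 * T0⁻¹ = R1 := Units.ext (by decide)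
  have q6 : T1 * R3 * T1⁻¹ = T0 := Units.ext (by decide)
  have q7 : T1 * R2 * T1⁻¹ = R1 := Units.ext (by decide)
  have q8 : T1 * R1 * T1⁻¹ = R2 := Units.ext (by decide)
  have q9 : T1 * T0 * T1⁻¹ = R3 := Units.ext (by decide)
  have q10 : T1 * T1 * T1⁻¹ = T1 := Units.ext (by decide)
  refine GW.ext (Units.ext (by decide)) (funext fun x => ?_)
  simp only [mulf, mulw, Fw, Ff, onef, onew, Tv0, Tv1, Tv2, Tv3, add_zero, e_conj, q1, q2, q3, q4, q5, q6, q7, q8, q9, q10]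
  ring

private lemma c12 : altProd (F 1) (F 2) 3 = altProd (F 2) (F 1) 3 := by
  show F 1 * (F 2 * (F 1 * (1))) = F 2 * (F 1 * (F 2 * (1)))
  have q1 : T1 * R4 * T1⁻¹ = T2 := Units.ext (by decide)
  have q2 : T1 * T1 * T1⁻¹ = T1 := Units.ext (by decide)
  have q3 : T1 * T2 * T1⁻¹ = R4 := Units.ext (by decide)
  have q4 : T2 * R4 * T2⁻¹ = T1 := Units.ext (by decide)
  have q5 : T2 * T1 * T2⁻¹ = R4 := Units.ext (by decide)
  have q6 : T2 * T2 * T2⁻¹ = T2 := Units.ext (by decide)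
  refine GW.ext (Units.ext (by decide)) (funext fun x => ?_)
  simp only [mulf, mulw, Fw, Ff, onef, onew, Tv0, Tv1, Tv2, Tv3, add_zero, e_conj, q1, q2, q3, q4, q5, q6]
  ring

private lemma c23 : altProd (F 2) (F 3) 3 = altProd (F 3) (F 2) 3 := by
  show F 2 * (F 3 * (F 2 * (1))) = F 3 * (F 2 * (F 3 * (1)))
  have q1 : T2 * R5 * T2⁻¹ = T3 := Units.ext (by decide)
  have q2 : T2 * T3 * T2⁻¹ = R5 := Units.ext (by decide)
  have q3 : T2 * T2 * T2⁻¹ = T2 := Units.ext (by decide)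
  have q4 : T3 * R5 * T3⁻¹ = T2 := Units.ext (by decide)
  have q5 : T3 * T3 * T3⁻¹ = T3 := Units.ext (by decide)
  have q6 : T3 * T2 * T3⁻¹ = R5 := Units.ext (by decide)
  refine GW.ext (Units.ext (by decide)) (funext fun x => ?_)
  simp only [mulf, mulw, Fw, Ff, onef, onew, Tv0, Tv1, Tv2, Tv3, add_zero, e_conj, q1, q2, q3, q4, q5, q6]
  ring

private lemma c02 : altProd (F 0) (F 2) 2 = altProd (F 2) (F 0) 2 := by
  show F 0 * (F 2 * (1)) = F 2 * (F 0 * (1))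
  have q1 : T0 * T0 * T0⁻¹ = T0 := Units.ext (by decide)
  have q2 : T0 * T2 * T0⁻¹ = T2 := Units.ext (by decide)
  have q3 : T2 * T0 * T2⁻¹ = T0 := Units.ext (by decide)
  have q4 : T2 * T2 * T2⁻¹ = T2 := Units.ext (by decide)
  refine GW.ext (Units.ext (by decide)) (funext fun x => ?_)
  simp only [mulf, mulw, Fw, Ff, onef, onew, Tv0, Tv1, Tv2, Tv3, add_zero, e_conj, q1, q2, q3, q4]
  ring

private lemma c03 : altProd (F 0) (F 3) 2 = altProd (F 3) (F 0) 2 := by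
  show F 0 * (F 3 * (1)) = F 3 * (F 0 * (1))
  have q1 : T0 * T0 * T0⁻¹ = T0 := Units.ext (by decide)
  have q2 : T0 * T3 * T0⁻¹ = T3 := Units.ext (by decide)
  have q3 : T3 * T0 * T3⁻¹ = T0 := Units.ext (by decide)
  have q4 : T3 * T3 * T3⁻¹ = T3 := Units.ext (by decide)
  refine GW.ext (Units.ext (by decide)) (funext fun x => ?_)
  simp only [mulf, mulw, Fw, Ff, onef, onew, Tv0, Tv1, Tv2, Tv3, add_zero, e_conj, q1, q2, q3, q4]
  ring

private lemma c13 : altProd (F 1) (F 3) 2 = altProd (F 3) (F 1) 2 := by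
  show F 1 * (F 3 * (1)) = F 3 * (F 1 * (1))
  have q1 : T1 * T1 * T1⁻¹ = T1 := Units.ext (by decide)
  have q2 : T1 * T3 * T1⁻¹ = T3 := Units.ext (by decide)
  have q3 : T3 * T1 * T3⁻¹ = T1 := Units.ext (by decide)
  have q4 : T3 * T3 * T3⁻¹ = T3 := Units.ext (by decide)
  refine GW.ext (Units.ext (by decide)) (funext fun x => ?_)
  simp only [mulf, mulw, Fw, Ff, onef, onew, Tv0, Tv1, Tv2, Tv3, add_zero, e_conj, q1, q2, q3, q4]
  ring

private lemma braidGW : ∀ (a b : Fin 4),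
    altProd (F a) (F b) (H4p a b) = altProd (F b) (F a) (H4p a b)
  | ⟨0, _⟩, ⟨0, _⟩ => rfl
  | ⟨0, _⟩, ⟨1, _⟩ => c01
  | ⟨0, _⟩, ⟨2, _⟩ => c02
  | ⟨0, _⟩, ⟨3, _⟩ => c03
  | ⟨1, _⟩, ⟨0, _⟩ => c01.symm
  | ⟨1, _⟩, ⟨1, _⟩ => rfl
  | ⟨1, _⟩, ⟨2, _⟩ => c12
  | ⟨1, _⟩, ⟨3, _⟩ => c13
  | ⟨2, _⟩, ⟨0, _⟩ => c02.symm
  | ⟨2, _⟩, ⟨1, _⟩ => c12.symm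
  | ⟨2, _⟩, ⟨2, _⟩ => rfl
  | ⟨2, _⟩, ⟨3, _⟩ => c23
  | ⟨3, _⟩, ⟨0, _⟩ => c03.symm
  | ⟨3, _⟩, ⟨1, _⟩ => c13.symm
  | ⟨3, _⟩, ⟨2, _⟩ => c23.symm
  | ⟨3, _⟩, ⟨3, _⟩ => rfl

private lemma hF : ∀ r ∈ artinRelationsSet H4p, FreeGroup.lift F r = 1 := by
  rintro r ⟨a, b, hab, rfl⟩
  rw [map_mul, map_inv, mul_inv_eq_one, map_altProd, map_altProd]
  simp only [FreeGroup.lift_apply_of]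
  exact braidGW a b

private def φ : ArtinGroup H4p →* GW := PresentedGroup.toGroup hF

private lemma φσ (i : Fin 4) : φ (σ H4p i) = F i := PresentedGroup.toGroup.of hF

private def Ldata : List ℕ := [4177274107001304, 4177274107001401, 4177274109944242, 4177274109945126, 4177274110339452, 4177274110340460, 4177274122931693, 4177274122931910, 4177274123283104, 4177274123283294, 4177552990848423, 4177552990849307, 4177553022722764, 4177553022732641, 4177553026440694, 4177553026451709, 4177553164677136, 4177553164679567, 4177553169289305, 4177553169291482, 4177558778933420, 4177558778934428, 4177558809548759, 4177558809558550, 4177558812754130, 4177558812765148, 4177558951224866, 4177558951227297, 4177558957886740, 4177558957888952, 4177743140163321, 4177743140163538, 4177743152901208, 4177743152911779, 4177743159050211, 4177743159060088, 4177743313830099, 4177743313832190, 4177743317169158, 4177743317170338, 4177748285127876, 4177748285128066, 4177748297514352, 4177748297524923, 4177748302799563, 4177748302809354, 4177748459350926, 4177748459353103, 4177748460362125, 4177748460363332, 4177795213441015, 4177795213441112, 4177795250599873, 4177795250610891, 4177795251976224, 4177795251987239, 4177795392394335, 4177795392395625, 4177795393814606, 4177795393815802, 4179819094221990, 4179819094226944,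 4179819099200374, 4179819099205224, 4179819129814261, 4179819129814705, 4179819152408187, 4179819152410618, 4179819165233703, 4179819165235794, 4179824882307108, 4179824882312065, 4179824886026369, 4179824886031133, 4179824917899379, 4179824917899826, 4179824938955917, 4179824938958348, 4179824953831173, 4179824953833350, 4179865610099167, 4179865610104121, 4179865610494498, 4179865610499455, 4179865629381364, 4179865629381388, 4179865683029762, 4179865683030969, 4179865684449939, 4179865684451119, 4179894123944932, 4179894123949696, 4179894129932873, 4179894129936943, 4179894141060033, 4179894141060261, 4179894180198206, 4179894180199496, 4179894183536354, 4179894183538566, 4179914917620181, 4179914917625031, 4179914922744330, 4179914922748400, 4179914935291667, 4179914935291868, 4179914974429934, 4179914974431130, 4179914975440163, 4179914975442340, 4180360798396474, 4180360798396498, 4180360800343970, 4180360800344198, 4180360801764147, 4180360801764348, 4180360814706548, 4180360814706992, 4180360815101879, 4180360815102326]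
private def LM : List M4 := Ldata.map dec
private def Ldata0 : List ℕ := [4177274107001401, 4177274107001304, 4177274110339452, 4177274110340460, 4177274109944242, 4177274109945126, 4177274123283104, 4177274123283294, 4177274122931693, 4177274122931910, 4177558778933420, 4177558778934428, 4177558809548759, 4177558809558550, 4177558812754130, 4177558812765148, 4177558951224866, 4177558951227297, 4177558957886740, 4177558957888952, 4177552990848423, 4177552990849307, 4177553022722764, 4177553022732641, 4177553026440694, 4177553026451709, 4177553164677136, 4177553164679567, 4177553169289305, 4177553169291482, 4177748285127876, 4177748285128066, 4177748297514352, 4177748297524923, 4177748302799563, 4177748302809354, 4177748459350926, 4177748459353103, 4177748460362125, 4177748460363332, 4177743140163321, 4177743140163538, 4177743152901208, 4177743152911779, 4177743159050211, 4177743159060088, 4177743313830099, 4177743313832190, 4177743317169158, 4177743317170338, 4177795213441112, 4177795213441015, 4177795251976224, 4177795251987239, 4177795250599873, 4177795250610891, 4177795393814606, 4177795393815802, 4177795392394335, 4177795392395625, 4179824882307108, 4179824882312065, 4179824886026369, 4179824886031133, 4179824917899379, 4179824917899826, 4179824938955917, 4179824938958348, 4179824953831173, 4179824953833350, 4179819094221990,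 4179819094226944, 4179819099200374, 4179819099205224, 4179819129814261, 4179819129814705, 4179819152408187, 4179819152410618, 4179819165233703, 4179819165235794, 4179865610494498, 4179865610499455, 4179865610099167, 4179865610104121, 4179865629381388, 4179865629381364, 4179865684449939, 4179865684451119, 4179865683029762, 4179865683030969, 4179914917620181, 4179914917625031, 4179914922744330, 4179914922748400, 4179914935291667, 4179914935291868, 4179914974429934, 4179914974431130, 4179914975440163, 4179914975442340, 4179894123944932, 4179894123949696, 4179894129932873, 4179894129936943, 4179894141060033, 4179894141060261, 4179894180198206, 4179894180199496, 4179894183536354, 4179894183538566, 4180360798396498, 4180360798396474, 4180360801764147, 4180360801764348, 4180360800343970, 4180360800344198, 4180360815101879, 4180360815102326, 4180360814706548, 4180360814706992]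
private def Ldata1 : List ℕ := [4177274110339452, 4177274110340460, 4177274123283104, 4177274123283294, 4177274107001304, 4177274107001401, 4177274122931910, 4177274122931693, 4177274109944242, 4177274109945126, 4177748285127876, 4177748285128066, 4177748297514352, 4177748297524923, 4177748302799563, 4177748302809354, 4177748460362125, 4177748460363332, 4177748459350926, 4177748459353103, 4177795213441015, 4177795213441112, 4177795251976224, 4177795251987239, 4177795250599873, 4177795250610891, 4177795393814606, 4177795393815802, 4177795392394335, 4177795392395625, 4177743140163538, 4177743140163321, 4177743159050211, 4177743159060088, 4177743152901208, 4177743152911779, 4177743317169158, 4177743317170338, 4177743313830099, 4177743313832190, 4177552990848423, 4177552990849307, 4177553022722764, 4177553022732641, 4177553026440694, 4177553026451709, 4177553169289305, 4177553169291482, 4177553164677136, 4177553164679567, 4177558778933420, 4177558778934428, 4177558812754130, 4177558812765148, 4177558809548759, 4177558809558550, 4177558957886740, 4177558957888952, 4177558951224866, 4177558951227297, 4179865610099167, 4179865610104121, 4179865610494498, 4179865610499455, 4179865629381364, 4179865629381388, 4179865683029762, 4179865683030969, 4179865684449939, 4179865684451119, 4179914917620181, 4179914917625031, 4179914922744330,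 4179914922748400, 4179914935291868, 4179914935291667, 4179914974429934, 4179914974431130, 4179914975440163, 4179914975442340, 4179819094221990, 4179819094226944, 4179819099200374, 4179819099205224, 4179819129814261, 4179819129814705, 4179819152408187, 4179819152410618, 4179819165233703, 4179819165235794, 4179894129932873, 4179894129936943, 4179894123944932, 4179894123949696, 4179894141060261, 4179894141060033, 4179894183536354, 4179894183538566, 4179894180198206, 4179894180199496, 4179824882307108, 4179824882312065, 4179824886026369, 4179824886031133, 4179824917899826, 4179824917899379, 4179824938955917, 4179824938958348, 4179824953831173, 4179824953833350, 4180360814706548, 4180360814706992, 4180360800344198, 4180360800343970, 4180360815102326, 4180360815101879, 4180360798396474, 4180360798396498, 4180360801764348, 4180360801764147]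
private def Ldata2 : List ℕ := [4177795213441015, 4177795213441112, 4177795251976224, 4177795251987239, 4177795250599873, 4177795250610891, 4177795393814606, 4177795393815802, 4177795392394335, 4177795392395625, 4177553026440694, 4177553026451709, 4177553169289305, 4177553169291482, 4177552990848423, 4177552990849307, 4177553164679567, 4177553164677136, 4177553022722764, 4177553022732641, 4177558812754130, 4177558812765148, 4177558957886740, 4177558957888952, 4177558778933420, 4177558778934428, 4177558951227297, 4177558951224866, 4177558809548759, 4177558809558550, 4179914974429934, 4179914974431130, 4179914922748400, 4179914922744330, 4179914975440163, 4179914975442340, 4179914917625031, 4179914917620181, 4179914935291667, 4179914935291868, 4179894180198206, 4179894180199496, 4179894129936943, 4179894129932873, 4179894183536354, 4179894183538566, 4179894123949696, 4179894123944932, 4179894141060033, 4179894141060261, 4177274107001304, 4177274107001401, 4177274110339452, 4177274110340460, 4177274109944242, 4177274109945126, 4177274123283104, 4177274123283294, 4177274122931693, 4177274122931910, 4179819129814261, 4179819129814705, 4179819165235794, 4179819165233703, 4179819094221990, 4179819094226944, 4179819152410618, 4179819152408187, 4179819099205224, 4179819099200374, 4179824917899379, 4179824917899826, 4179824953833350,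 4179824953831173, 4179824882307108, 4179824882312065, 4179824938958348, 4179824938955917, 4179824886031133, 4179824886026369, 4180360814706548, 4180360814706992, 4180360815101879, 4180360815102326, 4180360798396474, 4180360798396498, 4180360800343970, 4180360800344198, 4180360801764147, 4180360801764348, 4177748459353103, 4177748459350926, 4177748297524923, 4177748297514352, 4177748460362125, 4177748460363332, 4177748285127876, 4177748285128066, 4177748302799563, 4177748302809354, 4177743313832190, 4177743313830099, 4177743152911779, 4177743152901208, 4177743317169158, 4177743317170338, 4177743140163321, 4177743140163538, 4177743159050211, 4177743159060088, 4179865629381364, 4179865629381388, 4179865683029762, 4179865683030969, 4179865684449939, 4179865684451119, 4179865610099167, 4179865610104121, 4179865610494498, 4179865610499455]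

private lemma all_forall {α : Type*} {l : List α} {P : α → Prop} [DecidablePred P]
    (h : (l.all fun x => decide (P x)) = true) : ∀ x ∈ l, P x := by
  simpa only [List.all_eq_true, decide_eq_true_eq] using h

set_option maxRecDepth 40000 in
private lemma zip0 : ((Ldata.zip Ldata0).all fun p => decide (dec p.1 * T0.val = dec p.2)) = true := by decide
set_option maxRecDepth 40000 in
private lemma zip1 : ((Ldata.zip Ldata1).all fun p => decide (dec p.1 * T1.val = dec p.2)) = true := by decide
set_option maxRecDepth 40000 in
private lemma zip2 : ((Ldata.zip Ldata2).all fun p => decide (dec p.1 * T2.val = dec p.2)) = true := by decide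
set_option maxRecDepth 40000 in
private lemma sub0 : (Ldata0.all fun n => decide (n ∈ Ldata)) = true := by decide
set_option maxRecDepth 40000 in
private lemma sub1 : (Ldata1.all fun n => decide (n ∈ Ldata)) = true := by decide
set_option maxRecDepth 40000 in
private lemma sub2 : (Ldata2.all fun n => decide (n ∈ Ldata)) = true := by decide

set_option maxRecDepth 40000 in
private lemma noswapAll : (LM.all fun A =>
    !(decide (T0.val * A = A * T2.val) && decide (T2.val * A = A * T0.val))) = true := by decide

private lemma noswap : ∀ A ∈ LM, ¬(T0.val * A = A * T2.val ∧ T2.val * A = A * T0.val) := by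
  have h := noswapAll
  simp only [List.all_eq_true, Bool.not_eq_true', Bool.and_eq_false_iff,
    decide_eq_false_iff_not] at h
  intro A hA hsw
  rcases h A hA with h' | h'
  · exact h' hsw.1
  · exact h' hsw.2

private lemma closed_of_zip {ld ld' : List ℕ} {t : M4}
    (hlen : ld.length ≤ ld'.length)
    (hz : ∀ p ∈ ld.zip ld', dec p.1 * t = dec p.2)
    (hsub : ∀ n ∈ ld', n ∈ ld) :
    ∀ A ∈ ld.map dec, A * t ∈ ld.map dec := by
  intro A hA
  rcases List.mem_map.mp hA with ⟨n, hn, rfl⟩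
  rcases List.mem_iff_getElem.mp hn with ⟨i, hi, rfl⟩
  have hi' : i < ld'.length := lt_of_lt_of_le hi hlen
  have hiz : i < (ld.zip ld').length := by
    rw [List.length_zip]; omega
  have hmem : (ld[i], ld'[i]) ∈ ld.zip ld' := by
    have := List.getElem_zip (l := ld) (l' := ld') (i := i) (h := hiz)
    exact this ▸ List.getElem_mem hiz
  rw [hz _ hmem]
  exact List.mem_map_of_mem (f := dec) (hsub _ (List.getElem_mem hi'))

private lemma len0 : Ldata.length ≤ Ldata0.length := by decide
private lemma len1 : Ldata.length ≤ Ldata1.length := by decide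
private lemma len2 : Ldata.length ≤ Ldata2.length := by decide

private lemma closed0 : ∀ A ∈ LM, A * T0.val ∈ LM :=
  closed_of_zip len0 (all_forall zip0) (all_forall sub0)
private lemma closed1 : ∀ A ∈ LM, A * T1.val ∈ LM :=
  closed_of_zip len1 (all_forall zip1) (all_forall sub1)
private lemma closed2 : ∀ A ∈ LM, A * T2.val ∈ LM :=
  closed_of_zip len2 (all_forall zip2) (all_forall sub2)

private lemma oneL : (1 : M4) ∈ LM := by decide


private lemma Tinv (i : Fin 4) : (T i)⁻¹ = T i := by
  fin_cases i <;> exact Units.ext rfl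

private lemma phi_mem : ∀ c ∈ AP H4p ({0, 1, 2} : Set (Fin 4)), (φ c).w.val ∈ LM := by
  intro c hc
  unfold AP at hc
  induction hc using Subgroup.closure_induction_right with
  | one => simpa only [map_one, onew, Units.val_one] using oneL
  | mul_right x hx y hy ih =>
      rcases hy with ⟨i, hi, rfl⟩
      rw [map_mul, φσ, mulw, Fw, Units.val_mul]
      simp only [Set.mem_insert_iff, Set.mem_singleton_iff] at hi
      rcases hi with rfl | rfl | rfl
      · exact closed0 _ ih
      · exact closed1 _ ih
      · exact closed2 _ ih
  | mul_inv_cancel x hx y hy ih =>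
      rcases hy with ⟨i, hi, rfl⟩
      rw [map_mul, map_inv, φσ, mulw, invw, Fw, Tinv, Units.val_mul]
      simp only [Set.mem_insert_iff, Set.mem_singleton_iff] at hi
      rcases hi with rfl | rfl | rfl
      · exact closed0 _ ih
      · exact closed1 _ ih
      · exact closed2 _ ih

private lemma nonconj : ¬ ∃ c ∈ AP H4p ({0, 1, 2} : Set (Fin 4)),
    c⁻¹ * (σ H4p 0 * σ H4p 2 * σ H4p 2) * c = σ H4p 2 * σ H4p 0 * σ H4p 0 := by
  rintro ⟨c, hcAP, hc⟩
  have hg : F 0 * F 2 * F 2 = ⟨T0, fun x => e T0 x + e T2 x + e T2 x⟩ := by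
    have q1 : T0 * T2 * T0⁻¹ = T2 := Units.ext (by decide)
    have q2 : T0 * T2 * T2 * (T0 * T2)⁻¹ = T2 := Units.ext (by decide)
    refine GW.ext (Units.ext (by decide)) (funext fun x => ?_)
    simp only [mulf, mulw, Fw, Ff, Tv0, Tv2, e_conj, q1, q2]
  have hh : F 2 * F 0 * F 0 = ⟨T2, fun x => e T2 x + e T0 x + e T0 x⟩ := by
    have q1 : T2 * T0 * T2⁻¹ = T0 := Units.ext (by decide)
    have q2 : T2 * T0 * T0 * (T2 * T0)⁻¹ = T0 := Units.ext (by decide)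
    refine GW.ext (Units.ext (by decide)) (funext fun x => ?_)
    simp only [mulf, mulw, Fw, Ff, Tv0, Tv2, e_conj, q1, q2]
  have h2 : (F 0 * F 2 * F 2) * φ c = φ c * (F 2 * F 0 * F 0) := by
    have h := congrArg φ hc
    simp only [map_mul, map_inv, φσ] at h
    rw [← h]; group
  rw [hg, hh] at h2
  have hwval : T0 * (φ c).w = (φ c).w * T2 := congrArg GW.w h2
  have hf := congrFun (congrArg GW.f h2) T2
  have q3 : T0⁻¹ * T2 * T0 = T2 := Units.ext (by decide)
  have hT02 : T2 ≠ T0 := fun hco => absurd (congrArg Units.val hco) (by decide)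
  have hT22 : (T2 : M4ˣ) = T2 := rfl
  simp only [mulf, q3] at hf
  have hyT0 : ((φ c).w)⁻¹ * T2 * (φ c).w = T0 := by
    by_contra hne
    simp only [e, if_pos hT22, if_neg hT02, if_neg hne] at hf
    split_ifs at hf <;> omega
  have hsw2 : T2 * (φ c).w = (φ c).w * T0 := by rw [← hyT0]; group
  refine noswap ((φ c).w).val (phi_mem c hcAP) ⟨?_, ?_⟩
  · simpa only [Units.val_mul] using congrArg Units.val hwval
  · simpa only [Units.val_mul] using congrArg Units.val hsw2

end Part2

/-- Counterexample (e) of the paper: in the Artin–Tits group of type `H₄`, the elements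
`g = σ_1 σ_3 σ_3` and `h = σ_3 σ_1 σ_1` of the standard parabolic subgroup of type `H₃` on
`{s_1, s_2, s_3}` are conjugate in `A_S` but not in `A_X`; in particular `A_X` is not
conjugacy stable in `A_S`. -/
theorem H4_H3_not_conjugacy_stable :
    (∃ c : ArtinGroup H4p,
        c⁻¹ * (σ H4p 0 * σ H4p 2 * σ H4p 2) * c = σ H4p 2 * σ H4p 0 * σ H4p 0) ∧
    (¬ ∃ c ∈ AP H4p ({0, 1, 2} : Set (Fin 4)),
        c⁻¹ * (σ H4p 0 * σ H4p 2 * σ H4p 2) * c = σ H4p 2 * σ H4p 0 * σ H4p 0) ∧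
    ¬ IsConjugacyStable (AP H4p ({0, 1, 2} : Set (Fin 4))) := by
  refine ⟨existence, nonconj, ?_⟩
  intro hstab
  have h0 : σ H4p 0 ∈ AP H4p ({0, 1, 2} : Set (Fin 4)) :=
    Subgroup.subset_closure ⟨0, by simp, rfl⟩
  have h2m : σ H4p 2 ∈ AP H4p ({0, 1, 2} : Set (Fin 4)) :=
    Subgroup.subset_closure ⟨2, by simp, rfl⟩
  obtain ⟨cc, hcc, heq⟩ :=
    hstab _ _ (mul_mem (mul_mem h0 h2m) h2m) (mul_mem (mul_mem h2m h0) h0) existence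
  exact nonconj ⟨cc, hcc, heq⟩

end ArtinTits
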